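/- Let n ≥ 2 and z0, z1 ≥ 1 be integers with z0 + z1 ≤ n, and let Q be the associated voter-model rate matrix on S = {z1, …, n−z0}. Define μ_{z1} = 1 and μ_k = ∏_{j=z1}^{k−1} q_{j,j+1}/q_{j+1,j} for k ∈ S, and let π_k = μ_k / (∑_{l∈S} μ_l). Then the expected number of opinion-1 holders at equilibrium satisfies ∑_{k∈S} k·π_k = n·z1/(z0+z1). -/

import Mathlib

/-- Upward transition rate `q_{k,k+1} = k (n - k - z0) / (n - 1)` of the voter model
with `z0` zealots of opinion 0 and `z1` zealots of opinion 1 on the complete graph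
with `n` nodes. -/
noncomputable def qup (n z0 : ℕ) (k : ℕ) : ℝ :=
  (k : ℝ) * ((n : ℝ) - (k : ℝ) - (z0 : ℝ)) / ((n : ℝ) - 1)

/-- Downward transition rate `q_{k,k-1} = (k - z1) (n - k) / (n - 1)`. -/
noncomputable def qdown (n z1 : ℕ) (k : ℕ) : ℝ :=
  ((k : ℝ) - (z1 : ℝ)) * ((n : ℝ) - (k : ℝ)) / ((n : ℝ) - 1)

/-- `μ_k = ∏_{j=z1}^{k-1} q_{j,j+1} / q_{j+1,j}`, with `μ_{z1} = 1` (empty product). -/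
noncomputable def mu (n z0 z1 : ℕ) (k : ℕ) : ℝ :=
  ∏ j ∈ Finset.Ico z1 k, qup n z0 j / qdown n z1 (j + 1)

/-- The stationary distribution `π_k = μ_k / ∑_{l ∈ S} μ_l` on `S = {z1, …, n - z0}`. -/
noncomputable def statPi (n z0 z1 : ℕ) (k : ℕ) : ℝ :=
  mu n z0 z1 k / ∑ l ∈ Finset.Icc z1 (n - z0), mu n z0 z1 l

lemma qup_pos {n z0 : ℕ} (hn : 2 ≤ n) {j : ℕ} (hj1 : 1 ≤ j) (hj2 : j + z0 < n) :
    0 < qup n z0 j := by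
  unfold qup
  apply div_pos
  · apply mul_pos
    · exact_mod_cast hj1
    · have : ((j + z0 : ℕ) : ℝ) < (n : ℝ) := by exact_mod_cast hj2
      push_cast at this; linarith
  · have : (2 : ℝ) ≤ (n : ℝ) := by exact_mod_cast hn
    linarith

lemma qdown_pos {n z1 : ℕ} (hn : 2 ≤ n) {k : ℕ} (hk1 : z1 < k) (hk2 : k < n) :
    0 < qdown n z1 k := by
  unfold qdown
  apply div_pos
  · apply mul_pos
    · have : (z1 : ℝ) < (k : ℝ) := by exact_mod_cast hk1
      linarith
    · have : (k : ℝ) < (n : ℝ) := by exact_mod_cast hk2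
      linarith
  · have : (2 : ℝ) ≤ (n : ℝ) := by exact_mod_cast hn
    linarith

lemma mu_pos {n z0 z1 : ℕ} (hn : 2 ≤ n) (hz0 : 1 ≤ z0) (hz1 : 1 ≤ z1) (hsum : z0 + z1 ≤ n)
    {k : ℕ} (hk : k ∈ Finset.Icc z1 (n - z0)) : 0 < mu n z0 z1 k := by
  simp only [Finset.mem_Icc] at hk
  unfold mu
  apply Finset.prod_pos
  intro j hj
  simp only [Finset.mem_Ico] at hj
  apply div_pos
  · exact qup_pos hn (by omega) (by omega)
  · exact qdown_pos hn (by omega) (by omega)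

lemma balance {n z0 z1 : ℕ} (hn : 2 ≤ n) (hz0 : 1 ≤ z0) (hz1 : 1 ≤ z1) (hsum : z0 + z1 ≤ n)
    {j : ℕ} (hj1 : z1 ≤ j) (hj2 : j < n - z0) :
    mu n z0 z1 j * qup n z0 j = mu n z0 z1 (j + 1) * qdown n z1 (j + 1) := by
  have hd : qdown n z1 (j + 1) ≠ 0 :=
    ne_of_gt (qdown_pos hn (by omega) (by omega))
  unfold mu
  rw [Finset.prod_Ico_succ_top hj1, mul_assoc, div_mul_cancel₀ _ hd]

lemma telescope {n z0 z1 : ℕ} (hn : 2 ≤ n) (hz0 : 1 ≤ z0) (hz1 : 1 ≤ z1)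
    (hsum : z0 + z1 ≤ n) :
    ∑ k ∈ Finset.Icc z1 (n - z0), mu n z0 z1 k * qup n z0 k
      = ∑ k ∈ Finset.Icc z1 (n - z0), mu n z0 z1 k * qdown n z1 k := by
  have hle : z1 ≤ n - z0 := by omega
  have hup0 : qup n z0 (n - z0) = 0 := by
    unfold qup
    have h : ((n - z0 : ℕ) : ℝ) = (n : ℝ) - (z0 : ℝ) := by
      exact_mod_cast Nat.cast_sub (by omega)
    rw [h]; ring_nf
  have hdown0 : qdown n z1 z1 = 0 := by
    unfold qdown; ring_nf
  have hL : ∑ k ∈ Finset.Icc z1 (n - z0), mu n z0 z1 k * qup n z0 k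
      = ∑ k ∈ Finset.Ico z1 (n - z0), mu n z0 z1 k * qup n z0 k := by
    rw [Finset.Icc_eq_cons_Ico hle, Finset.sum_cons, hup0, mul_zero, zero_add]
  have hR : ∑ k ∈ Finset.Icc z1 (n - z0), mu n z0 z1 k * qdown n z1 k
      = ∑ k ∈ Finset.Ioc z1 (n - z0), mu n z0 z1 k * qdown n z1 k := by
    rw [Finset.Icc_eq_cons_Ioc hle, Finset.sum_cons, hdown0, mul_zero, zero_add]
  rw [hL, hR]
  rw [Finset.sum_congr rfl (fun j hj => by
    simp only [Finset.mem_Ico] at hj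
    exact balance hn hz0 hz1 hsum hj.1 hj.2)]
  rw [← Finset.Ico_add_one_add_one_eq_Ioc, ← Finset.map_add_right_Ico z1 (n - z0) 1,
    Finset.sum_map]
  simp [addRightEmbedding]

/-- The expected number of opinion-1 holders at equilibrium is `n z1 / (z0 + z1)`. -/
theorem expected_opinion_one_at_equilibrium (n z0 z1 : ℕ) (hn : 2 ≤ n)
    (hz0 : 1 ≤ z0) (hz1 : 1 ≤ z1) (hsum : z0 + z1 ≤ n) :
    ∑ k ∈ Finset.Icc z1 (n - z0), (k : ℝ) * statPi n z0 z1 k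
      = (n : ℝ) * (z1 : ℝ) / ((z0 : ℝ) + (z1 : ℝ)) := by
  set S := Finset.Icc z1 (n - z0) with hS
  have hne : S.Nonempty := ⟨z1, Finset.mem_Icc.mpr ⟨le_refl _, by omega⟩⟩
  have hT : 0 < ∑ l ∈ S, mu n z0 z1 l :=
    Finset.sum_pos (fun k hk => mu_pos hn hz0 hz1 hsum hk) hne
  set T := ∑ l ∈ S, mu n z0 z1 l with hTdef
  have hn1 : (n : ℝ) - 1 ≠ 0 := by
    have : (2 : ℝ) ≤ (n : ℝ) := by exact_mod_cast hn
    linarith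
  -- drift identity summed over S
  have hdrift : ∑ k ∈ S, mu n z0 z1 k * ((z1 : ℝ) * n - (k : ℝ) * ((z0 : ℝ) + z1)) = 0 := by
    have h1 : ∀ k : ℕ, mu n z0 z1 k * ((z1 : ℝ) * n - (k : ℝ) * ((z0 : ℝ) + z1))
        = ((n : ℝ) - 1) * (mu n z0 z1 k * qup n z0 k - mu n z0 z1 k * qdown n z1 k) := by
      intro k
      unfold qup qdown
      field_simp
      ring
    rw [Finset.sum_congr rfl (fun k _ => h1 k), ← Finset.mul_sum,
      Finset.sum_sub_distrib, telescope hn hz0 hz1 hsum]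
    simp [hS]
  have hA : (z1 : ℝ) * n * T = ((z0 : ℝ) + z1) * ∑ k ∈ S, (k : ℝ) * mu n z0 z1 k := by
    have : ∑ k ∈ S, mu n z0 z1 k * ((z1 : ℝ) * n - (k : ℝ) * ((z0 : ℝ) + z1))
        = (z1 : ℝ) * n * T - ((z0 : ℝ) + z1) * ∑ k ∈ S, (k : ℝ) * mu n z0 z1 k := by
      rw [Finset.sum_congr rfl (fun k _ => by ring :
        ∀ k ∈ S, mu n z0 z1 k * ((z1 : ℝ) * n - (k : ℝ) * ((z0 : ℝ) + z1))
          = (z1 : ℝ) * n * mu n z0 z1 k - ((z0 : ℝ) + z1) * ((k : ℝ) * mu n z0 z1 k)),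
        Finset.sum_sub_distrib, ← Finset.mul_sum, ← Finset.mul_sum, hTdef]
    linarith [hdrift, this]
  have hz01 : (z0 : ℝ) + (z1 : ℝ) ≠ 0 := by positivity
  have hTne : T ≠ 0 := ne_of_gt hT
  have hsumPi : ∑ k ∈ S, (k : ℝ) * statPi n z0 z1 k
      = (∑ k ∈ S, (k : ℝ) * mu n z0 z1 k) / T := by
    rw [Finset.sum_div]
    refine Finset.sum_congr rfl (fun k _ => ?_)
    unfold statPi
    rw [← hS, ← hTdef, mul_div_assoc]
  rw [hsumPi]
  rw [div_eq_div_iff hTne hz01]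
  linarith [hA]
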